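/- Let F = ZMod 37 and A = F[t₁,…,t₈]. Let c₈ = t₁⋯t₈ be the 8th elementary symmetric polynomial in t₁,…,t₈ and p_k the k-th elementary symmetric polynomial in t₁²,…,t₈². Let D be the unique F-linear derivation of A with D(t_i) = t_i^37, and S = Algebra.adjoin F {p₁,…,p₇,c₈}. Set z̃₈ = 120p₄ + 1680c₈ + p₁²p₂ − 36p₁p₃ + 10p₂², z̃₁₂ = 60p₆ − p₁p₂p₃ − 5p₁p₅ + 5·36⁻¹·p₂³ − 5p₂p₄ + 110p₂c₈ + 3p₃², and z̃₁₄ = 480p₇ − p₂²p₃ + 40p₂p₅ − 12p₃p₄ + 312p₃c₈. Let C = F[Z₂,Z₈,Z₁₂,Z₁₄,Z₁₈,Z₂₀,Z₂₄,Z₃₀] and φ : C → A an F-algebra homomorphism such that φ(Z₂) = p₁; φ(Z₈) ≡ z̃₈ and φ(Z₁₂) ≡ z̃₁₂ modulo the ideal (p₁²); φ(Z₁₄) ≡ z̃₁₄ modulo the ideal (p₁); and for each i ∈ {8,12,14,18,20,24,30}, φ(Z_i) ∈ S is homogeneous of total degree i. Then for every h ∈ C with φ(h) = D(φ(Z₈)),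 the coefficient of the monomial Z₂₀·Z₂₄ in h is nonzero. -/

import Mathlib

set_option maxRecDepth 100000

open MvPolynomial

/-- The `k`-th elementary symmetric polynomial in `t₁, …, t₈` over `ZMod 37`. -/
noncomputable def cE8 (k : ℕ) : MvPolynomial (Fin 8) (ZMod 37) :=
  ∑ s ∈ Finset.powersetCard k Finset.univ, ∏ i ∈ s, X i

/-- The `k`-th elementary symmetric polynomial in `t₁², …, t₈²` over `ZMod 37`. -/
noncomputable def pE8 (k : ℕ) : MvPolynomial (Fin 8) (ZMod 37) :=
  ∑ s ∈ Finset.powersetCard k Finset.univ, ∏ i ∈ s, (X i) ^ 2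

/-- `z̃₈ = 120p₄ + 1680c₈ + p₁²p₂ − 36p₁p₃ + 10p₂²`. -/
noncomputable def zt8 : MvPolynomial (Fin 8) (ZMod 37) :=
  120 * pE8 4 + 1680 * cE8 8 + pE8 1 ^ 2 * pE8 2 - 36 * pE8 1 * pE8 3 + 10 * pE8 2 ^ 2

/-- `z̃₁₂ = 60p₆ − p₁p₂p₃ − 5p₁p₅ + 5·36⁻¹·p₂³ − 5p₂p₄ + 110p₂c₈ + 3p₃²`. -/
noncomputable def zt12 : MvPolynomial (Fin 8) (ZMod 37) :=
  60 * pE8 6 - pE8 1 * pE8 2 * pE8 3 - 5 * pE8 1 * pE8 5 +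
    C (5 * (36 : ZMod 37)⁻¹) * pE8 2 ^ 3 - 5 * pE8 2 * pE8 4 + 110 * pE8 2 * cE8 8 +
    3 * pE8 3 ^ 2

/-- `z̃₁₄ = 480p₇ − p₂²p₃ + 40p₂p₅ − 12p₃p₄ + 312p₃c₈`. -/
noncomputable def zt14 : MvPolynomial (Fin 8) (ZMod 37) :=
  480 * pE8 7 - pE8 2 ^ 2 * pE8 3 + 40 * pE8 2 * pE8 5 - 12 * pE8 3 * pE8 4 +
    312 * pE8 3 * cE8 8

namespace E8w

/-! ### The quadratic extension `F₃₇(√2)` -/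

structure Q : Type where
  x : ZMod 37
  y : ZMod 37
deriving DecidableEq

namespace Q

instance : Zero Q := ⟨⟨0,0⟩⟩
instance : One Q := ⟨⟨1,0⟩⟩
instance : Add Q := ⟨fun p q => ⟨p.x + q.x, p.y + q.y⟩⟩
instance : Mul Q := ⟨fun p q => ⟨p.x*q.x + 2*p.y*q.y, p.x*q.y + p.y*q.x⟩⟩
instance : Neg Q := ⟨fun p => ⟨-p.x, -p.y⟩⟩

@[ext] lemma ext {p q : Q} (hx : p.x = q.x) (hy : p.y = q.y) : p = q := by
  cases p; cases q; simp_all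

@[simp] lemma add_x (p q : Q) : (p + q).x = p.x + q.x := rfl
@[simp] lemma add_y (p q : Q) : (p + q).y = p.y + q.y := rfl
@[simp] lemma mul_x (p q : Q) : (p * q).x = p.x*q.x + 2*p.y*q.y := rfl
@[simp] lemma mul_y (p q : Q) : (p * q).y = p.x*q.y + p.y*q.x := rfl
@[simp] lemma neg_x (p : Q) : (-p).x = -p.x := rfl
@[simp] lemma neg_y (p : Q) : (-p).y = -p.y := rfl
@[simp] lemma zero_x : (0 : Q).x = 0 := rfl
@[simp] lemma zero_y : (0 : Q).y = 0 := rfl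
@[simp] lemma one_x : (1 : Q).x = 1 := rfl
@[simp] lemma one_y : (1 : Q).y = 0 := rfl

instance : CommRing Q where
  add_assoc := by intros; ext <;> simp <;> ring
  zero_add := by intros; ext <;> simp
  add_zero := by intros; ext <;> simp
  add_comm := by intros; ext <;> simp <;> ring
  mul_assoc := by intros; ext <;> simp <;> ring
  one_mul := by intros; ext <;> simp
  mul_one := by intros; ext <;> simp
  left_distrib := by intros; ext <;> simp <;> ring
  right_distrib := by intros; ext <;> simp <;> ring
  mul_comm := by intros; ext <;> simp <;> ring
  zero_mul := by intros; ext <;> simp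
  mul_zero := by intros; ext <;> simp
  neg_add_cancel := by intros; ext <;> simp
  nsmul := nsmulRec
  zsmul := zsmulRec
  natCast := fun n => ⟨(n : ZMod 37), 0⟩
  natCast_zero := by ext <;> simp
  natCast_succ := fun n => by ext <;> simp

def J : ZMod 37 →+* Q where
  toFun c := ⟨c, 0⟩
  map_one' := rfl
  map_mul' := by intros; ext <;> simp
  map_zero' := rfl
  map_add' := by intros; ext <;> simp

instance : Algebra (ZMod 37) Q := J.toAlgebra

@[simp] lemma algebraMap_apply (c : ZMod 37) : algebraMap (ZMod 37) Q c = ⟨c, 0⟩ := rfl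

end Q

/-! ### The witness point in `GF(37²)⁸` and associated constants -/

def lam : Fin 8 → Q := ![⟨1,0⟩,⟨5,13⟩,⟨5,24⟩,⟨8,10⟩,⟨8,27⟩,⟨18,0⟩,⟨32,3⟩,⟨32,34⟩]

def pv (k : ℕ) : Q := ∑ s ∈ Finset.powersetCard k Finset.univ, ∏ j ∈ s, lam j ^ 2
def cv : Q := ∑ s ∈ Finset.powersetCard 8 (Finset.univ : Finset (Fin 8)), ∏ j ∈ s, lam j
def dv (k : ℕ) : Q := ∑ s ∈ Finset.powersetCard k Finset.univ, ∑ j ∈ s,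
    (∏ i ∈ s.erase j, lam i ^ 2) * (2 * lam j ^ 38)
def dc : Q := ∑ s ∈ Finset.powersetCard 8 (Finset.univ : Finset (Fin 8)), ∑ j ∈ s,
    (∏ i ∈ s.erase j, lam i) * lam j ^ 37

def S8 : Q := 120 * pv 4 + 1680 * cv + pv 1 ^ 2 * pv 2 - 36 * pv 1 * pv 3 + 10 * pv 2 ^ 2
def S12 : Q := 60 * pv 6 - pv 1 * pv 2 * pv 3 - 5 * pv 1 * pv 5 +
    algebraMap (ZMod 37) Q (5 * 36) * pv 2 ^ 3 - 5 * pv 2 * pv 4 +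
    110 * pv 2 * cv + 3 * pv 3 ^ 2

lemma inv36 : (36 : ZMod 37)⁻¹ = 36 := by
  have h : (36 : ZMod 37) * 36 = 1 := by decide
  haveI : Fact (Nat.Prime 37) := ⟨by norm_num⟩
  exact inv_eq_of_mul_eq_one_right h
def S14 : Q := 480 * pv 7 - pv 2 ^ 2 * pv 3 + 40 * pv 2 * pv 5 - 12 * pv 3 * pv 4 + 312 * pv 3 * cv
def S44 : Q := 120 * dv 4 + 1680 * dc + (pv 1 ^ 2 * dv 2 + pv 2 * (2 * (pv 1 * dv 1)))
    - 36 * (pv 1 * dv 3 + pv 3 * dv 1) + 10 * (2 * (pv 2 * dv 2))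

lemma pv1_eq : pv 1 = 0 := by decide
lemma S8_eq : S8 = 0 := by decide
lemma S12_eq : S12 = 0 := by decide
lemma S14_eq : S14 = 0 := by decide
lemma S44_ne : S44 ≠ 0 := by decide

/-! ### The specialization `ψ : t_i ↦ λ_i · u` -/

abbrev A := MvPolynomial (Fin 8) (ZMod 37)

noncomputable def ψ : A →ₐ[ZMod 37] Polynomial Q :=
  aeval fun i => Polynomial.C (lam i) * Polynomial.X

@[simp] lemma psi_X (i : Fin 8) : ψ (X i) = Polynomial.C (lam i) * Polynomial.X :=
  aeval_X _ _

@[simp] lemma psi_C (c : ZMod 37) :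
    ψ (C c) = Polynomial.C (algebraMap (ZMod 37) Q c) := by
  rw [show ψ (C c) = algebraMap (ZMod 37) (Polynomial Q) c from aeval_C _ _,
    Polynomial.algebraMap_apply]

lemma psi_prod_sq (t : Finset (Fin 8)) :
    ψ (∏ j ∈ t, X j ^ 2) = Polynomial.C (∏ j ∈ t, lam j ^ 2) * Polynomial.X ^ (2 * t.card) := by
  rw [map_prod]
  have h : ∀ j ∈ t, ψ (X j ^ 2) = Polynomial.C (lam j ^ 2) * Polynomial.X ^ 2 := by
    intro j _
    rw [map_pow, psi_X, mul_pow, ← map_pow]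
  rw [Finset.prod_congr rfl h, Finset.prod_mul_distrib, Finset.prod_const, ← map_prod, ← pow_mul]

lemma psi_prod (t : Finset (Fin 8)) :
    ψ (∏ j ∈ t, X j) = Polynomial.C (∏ j ∈ t, lam j) * Polynomial.X ^ t.card := by
  rw [map_prod]
  have h : ∀ j ∈ t, ψ (X j) = Polynomial.C (lam j) * Polynomial.X := fun j _ => psi_X j
  rw [Finset.prod_congr rfl h, Finset.prod_mul_distrib, Finset.prod_const, ← map_prod]

lemma psi_pE8 (k : ℕ) : ψ (pE8 k) = Polynomial.C (pv k) * Polynomial.X ^ (2 * k) := by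
  rw [pE8, map_sum, pv, map_sum, Finset.sum_mul]
  refine Finset.sum_congr rfl fun s hs => ?_
  rw [psi_prod_sq, (Finset.mem_powersetCard.mp hs).2]

lemma psi_cE8 : ψ (cE8 8) = Polynomial.C cv * Polynomial.X ^ 8 := by
  rw [cE8, map_sum, cv, map_sum, Finset.sum_mul]
  refine Finset.sum_congr rfl fun s hs => ?_
  rw [psi_prod, (Finset.mem_powersetCard.mp hs).2]

/-! ### Derivations and products -/

lemma D_prod (D : Derivation (ZMod 37) A A) (f : Fin 8 → A) (t : Finset (Fin 8)) :
    D (∏ j ∈ t, f j) = ∑ j ∈ t, (∏ i ∈ t.erase j, f i) * D (f j) := by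
  classical
  induction t using Finset.induction_on with
  | empty => simp
  | @insert a s ha ih =>
    rw [Finset.prod_insert ha, Derivation.leibniz, ih, smul_eq_mul, smul_eq_mul,
      Finset.sum_insert ha, Finset.erase_insert ha, Finset.mul_sum]
    rw [add_comm]
    congr 1
    refine Finset.sum_congr rfl fun j hj => ?_
    have hne : a ≠ j := fun h => ha (h ▸ hj)
    rw [Finset.erase_insert_of_ne hne, Finset.prod_insert (fun h => ha (Finset.mem_of_mem_erase h))]
    ring

section Dlemmas

variable (D : Derivation (ZMod 37) A A) (hD : ∀ i, D (X i) = X i ^ 37)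

include hD in
lemma DX2 (i : Fin 8) : D (X i ^ 2) = (2 : A) * X i ^ 38 := by
  rw [Derivation.leibniz_pow, hD]
  show (2 : ℕ) • (X i ^ (2-1) • (X i ^ 37 : A)) = _
  rw [smul_eq_mul, nsmul_eq_mul]
  push_cast
  ring

include hD in
lemma psi_D_pE8 (k : ℕ) (hk : 1 ≤ k) :
    ψ (D (pE8 k)) = Polynomial.C (dv k) * Polynomial.X ^ (36 + 2 * k) := by
  rw [pE8, map_sum, map_sum, dv, map_sum, Finset.sum_mul]
  refine Finset.sum_congr rfl fun s hs => ?_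
  obtain ⟨-, hcard⟩ := Finset.mem_powersetCard.mp hs
  rw [D_prod, map_sum, map_sum, Finset.sum_mul]
  refine Finset.sum_congr rfl fun j hj => ?_
  rw [map_mul, psi_prod_sq, DX2 D hD, map_mul, map_pow, psi_X, map_ofNat,
    Finset.card_erase_of_mem hj, hcard, map_mul, map_mul, map_pow, map_ofNat,
    show 36 + 2 * k = 2 * (k - 1) + 38 by omega]
  ring

include hD in
lemma psi_D_cE8 : ψ (D (cE8 8)) = Polynomial.C dc * Polynomial.X ^ 44 := by
  rw [cE8, map_sum, map_sum, dc, map_sum, Finset.sum_mul]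
  refine Finset.sum_congr rfl fun s hs => ?_
  obtain ⟨-, hcard⟩ := Finset.mem_powersetCard.mp hs
  rw [D_prod, map_sum, map_sum, Finset.sum_mul]
  refine Finset.sum_congr rfl fun j hj => ?_
  rw [map_mul, psi_prod, hD, map_pow, psi_X, Finset.card_erase_of_mem hj, hcard,
    map_mul, map_pow, show (44 : ℕ) = 7 + 37 by norm_num]
  ring

omit hD

lemma Dnum (n : ℕ) [n.AtLeastTwo] : D (OfNat.ofNat n : A) = 0 := by
  rw [show (OfNat.ofNat n : A) = ((n : ℕ) : A) by norm_cast]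
  exact D.map_natCast n

include hD in
lemma psi_D_zt8 : ψ (D zt8) = Polynomial.C S44 * Polynomial.X ^ 44 := by
  have hDzt8 : D zt8 = 120 * D (pE8 4) + 1680 * D (cE8 8)
      + (pE8 1 ^ 2 * D (pE8 2) + pE8 2 * (2 * (pE8 1 * D (pE8 1))))
      - 36 * (pE8 1 * D (pE8 3) + pE8 3 * D (pE8 1))
      + 10 * (2 * (pE8 2 * D (pE8 2))) := by
    have e120 : D (120 : A) = 0 := Dnum D 120
    have e1680 : D (1680 : A) = 0 := Dnum D 1680
    have e36 : D (36 : A) = 0 := Dnum D 36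
    have e10 : D (10 : A) = 0 := Dnum D 10
    rw [zt8]
    simp only [map_add, map_sub]
    simp only [Derivation.leibniz, Derivation.leibniz_pow, smul_eq_mul, nsmul_eq_mul,
      e120, e1680, e36, e10, mul_zero, add_zero, zero_add, pow_one, Nat.cast_ofNat]
    ring
  rw [hDzt8]
  simp only [map_add, map_sub, map_mul, map_pow, map_ofNat, psi_pE8, psi_cE8,
    psi_D_pE8 D hD 1 (by norm_num), psi_D_pE8 D hD 2 (by norm_num),
    psi_D_pE8 D hD 3 (by norm_num), psi_D_pE8 D hD 4 (by norm_num), psi_D_cE8 D hD]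
  rw [S44]
  simp only [map_add, map_sub, map_mul, map_pow, map_ofNat]
  ring

end Dlemmas

lemma psi_zt8 : ψ zt8 = Polynomial.C S8 * Polynomial.X ^ 8 := by
  rw [zt8]
  simp only [map_add, map_sub, map_mul, map_pow, map_ofNat, psi_pE8, psi_cE8]
  rw [S8]
  simp only [map_add, map_sub, map_mul, map_pow, map_ofNat]
  ring

lemma psi_zt12 : ψ zt12 = Polynomial.C S12 * Polynomial.X ^ 12 := by
  rw [zt12, inv36]
  simp only [map_add, map_sub, map_mul, map_pow, map_ofNat, psi_pE8, psi_cE8, psi_C]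
  rw [S12]
  simp only [map_add, map_sub, map_mul, map_pow, map_ofNat, Polynomial.algebraMap_apply]
  ring

lemma psi_zt14 : ψ zt14 = Polynomial.C S14 * Polynomial.X ^ 14 := by
  rw [zt14]
  simp only [map_add, map_sub, map_mul, map_pow, map_ofNat, psi_pE8, psi_cE8]
  rw [S14]
  simp only [map_add, map_sub, map_mul, map_pow, map_ofNat]
  ring

lemma psi_p1 : ψ (pE8 1) = 0 := by
  rw [psi_pE8, pv1_eq, map_zero, zero_mul]

/-! ### Homogeneous polynomials specialize to `C a * X^n` -/

lemma psi_hom {P : A} {n : ℕ} (hP : P.IsHomogeneous n) :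
    ∃ a : Q, ψ P = Polynomial.C a * Polynomial.X ^ n := by
  classical
  refine ⟨∑ d ∈ P.support, algebraMap (ZMod 37) Q (coeff d P) * ∏ i, lam i ^ d i, ?_⟩
  conv_lhs => rw [P.as_sum]
  rw [map_sum, map_sum, Finset.sum_mul]
  refine Finset.sum_congr rfl fun d hd => ?_
  rw [show (ψ : A →ₐ[ZMod 37] Polynomial Q) = aeval fun i => Polynomial.C (lam i) * Polynomial.X from rfl,
    aeval_monomial]
  rw [Finsupp.prod_pow]
  have hdeg : ∑ i, d i = n := by
    have h1 := hP (mem_support_iff.mp hd)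
    rw [← h1, Finsupp.weight_apply, Finsupp.sum]
    rw [Finset.sum_subset (Finset.subset_univ d.support)]
    · exact Finset.sum_congr rfl fun i _ => by simp
    · intro i _ hi
      simp [Finsupp.notMem_support_iff.mp hi]
  calc algebraMap (ZMod 37) (Polynomial Q) (coeff d P) *
        ∏ i, (Polynomial.C (lam i) * Polynomial.X) ^ d i
      = Polynomial.C (algebraMap (ZMod 37) Q (coeff d P)) *
        ((∏ i, Polynomial.C (lam i ^ d i)) * Polynomial.X ^ ∑ i, d i) := by
        rw [Polynomial.algebraMap_apply]
        refine congrArg (_ * ·) ?_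
        simp only [mul_pow, ← map_pow]
        rw [Finset.prod_mul_distrib, Finset.prod_pow_eq_pow_sum]
    _ = Polynomial.C (algebraMap (ZMod 37) Q (coeff d P) * ∏ i, lam i ^ d i) *
        Polynomial.X ^ n := by
        rw [hdeg, map_mul, map_prod]
        ring

/-! ### Extracting the coefficient of `u⁴⁴` -/

def dvec : Fin 8 → ℕ := ![2, 8, 12, 14, 18, 20, 24, 30]

noncomputable def m0 : Fin 8 →₀ ℕ := Finsupp.single (5 : Fin 8) 1 + Finsupp.single 6 1

lemma m0_apply (i : Fin 8) : m0 i = if i = 5 then 1 else if i = 6 then 1 else 0 := by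
  fin_cases i <;> simp [m0]

lemma m0_vals : m0 0 = 0 ∧ m0 1 = 0 ∧ m0 2 = 0 ∧ m0 3 = 0 ∧ m0 4 = 0 ∧
    m0 5 = 1 ∧ m0 6 = 1 ∧ m0 7 = 0 := by
  refine ⟨?_, ?_, ?_, ?_, ?_, ?_, ?_, ?_⟩ <;> simp [m0, Finsupp.single_apply]

lemma dvec_vals : dvec 0 = 2 ∧ dvec 1 = 8 ∧ dvec 2 = 12 ∧ dvec 3 = 14 ∧ dvec 4 = 18 ∧
    dvec 5 = 20 ∧ dvec 6 = 24 ∧ dvec 7 = 30 :=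
  ⟨rfl, rfl, rfl, rfl, rfl, rfl, rfl, rfl⟩

lemma coeff44 (G : Fin 8 → Polynomial Q) (a : Fin 8 → Q)
    (hG : ∀ i, G i = Polynomial.C (a i) * Polynomial.X ^ dvec i)
    (h0 : a 0 = 0) (h1 : a 1 = 0) (h2 : a 2 = 0) (h3 : a 3 = 0)
    (h : A) :
    (aeval G h).coeff 44 = algebraMap (ZMod 37) Q (coeff m0 h) * (a 5 * a 6) := by
  classical
  rw [aeval_def, eval₂_eq', Polynomial.finset_sum_coeff]
  have hprod : ∀ m : Fin 8 →₀ ℕ, ∏ i, G i ^ m i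
      = Polynomial.C (∏ i, a i ^ m i) * Polynomial.X ^ ∑ i, dvec i * m i := by
    intro m
    simp only [hG, mul_pow, ← pow_mul, ← map_pow]
    rw [Finset.prod_mul_distrib, map_prod, ← Finset.prod_pow_eq_pow_sum]
  have hterm : ∀ m : Fin 8 →₀ ℕ,
      (algebraMap (ZMod 37) (Polynomial Q) (coeff m h) * ∏ i, G i ^ m i).coeff 44
      = algebraMap (ZMod 37) Q (coeff m h) *
          (if (∑ i, dvec i * m i) = 44 then ∏ i, a i ^ m i else 0) := by
    intro m
    rw [hprod, Polynomial.algebraMap_apply, ← mul_assoc, ← map_mul, Polynomial.coeff_C_mul,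
      Polynomial.coeff_X_pow]
    by_cases hE : (∑ i, dvec i * m i) = 44
    · rw [if_pos hE, if_pos hE.symm, mul_one]
    · rw [if_neg hE, if_neg fun hc => hE hc.symm, mul_zero, mul_zero]
  rw [Finset.sum_congr rfl fun m _ => hterm m]
  have hz : ∀ (m : Fin 8 →₀ ℕ) (i : Fin 8), a i = 0 → m i ≠ 0 → (∏ j, a j ^ m j) = 0 := by
    intro m i hai hmi
    exact Finset.prod_eq_zero (Finset.mem_univ i) (by rw [hai, zero_pow hmi])
  rw [Finset.sum_eq_single m0]
  · obtain ⟨f0, f1, f2, f3, f4, f5, f6, f7⟩ := m0_vals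
    obtain ⟨g0, g1, g2, g3, g4, g5, g6, g7⟩ := dvec_vals
    have hsum : (∑ i, dvec i * m0 i) = 44 := by
      rw [Fin.sum_univ_eight, f0, f1, f2, f3, f4, f5, f6, f7, g5, g6]
      norm_num
    have hprod0 : (∏ j, a j ^ m0 j) = a 5 * a 6 := by
      rw [Fin.prod_univ_eight, f0, f1, f2, f3, f4, f5, f6, f7]
      simp [pow_zero, pow_one]
    rw [if_pos hsum, hprod0]
  · intro m _ hne
    by_cases hE : (∑ i, dvec i * m i) = 44
    · rw [if_pos hE]
      by_cases c0 : m 0 = 0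
      · by_cases c1 : m 1 = 0
        · by_cases c2 : m 2 = 0
          · by_cases c3 : m 3 = 0
            · exfalso
              apply hne
              obtain ⟨g0, g1, g2, g3, g4, g5, g6, g7⟩ := dvec_vals
              rw [Fin.sum_univ_eight, g0, g1, g2, g3, g4, g5, g6, g7, c0, c1, c2, c3] at hE
              have h4567 : m 4 = 0 ∧ m 5 = 1 ∧ m 6 = 1 ∧ m 7 = 0 := by omega
              obtain ⟨k4, k5, k6, k7⟩ := h4567
              obtain ⟨f0, f1, f2, f3, f4, f5, f6, f7⟩ := m0_vals
              ext i
              fin_cases i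
              · show m 0 = m0 0; rw [c0, f0]
              · show m 1 = m0 1; rw [c1, f1]
              · show m 2 = m0 2; rw [c2, f2]
              · show m 3 = m0 3; rw [c3, f3]
              · show m 4 = m0 4; rw [k4, f4]
              · show m 5 = m0 5; rw [k5, f5]
              · show m 6 = m0 6; rw [k6, f6]
              · show m 7 = m0 7; rw [k7, f7]
            · rw [hz m 3 h3 c3, mul_zero]
          · rw [hz m 2 h2 c2, mul_zero]
        · rw [hz m 1 h1 c1, mul_zero]
      · rw [hz m 0 h0 c0, mul_zero]
    · rw [if_neg hE, mul_zero]
  · intro hm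
    rw [notMem_support_iff.mp hm, map_zero, zero_mul]

end E8w

open E8w in
theorem stmt16
    (D : Derivation (ZMod 37) (MvPolynomial (Fin 8) (ZMod 37)) (MvPolynomial (Fin 8) (ZMod 37)))
    (hD : ∀ i, D (X i) = X i ^ 37)
    (φ : MvPolynomial (Fin 8) (ZMod 37) →ₐ[ZMod 37] MvPolynomial (Fin 8) (ZMod 37))
    (h2 : φ (X 0) = pE8 1)
    (h8 : φ (X 1) - zt8 ∈ Ideal.span {pE8 1 ^ 2})
    (h12 : φ (X 2) - zt12 ∈ Ideal.span {pE8 1 ^ 2})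
    (h14 : φ (X 3) - zt14 ∈ Ideal.span {pE8 1})
    (hmem8 : φ (X 1) ∈ Algebra.adjoin (ZMod 37)
        {pE8 1, pE8 2, pE8 3, pE8 4, pE8 5, pE8 6, pE8 7, cE8 8} ∧
      (φ (X 1)).IsHomogeneous 8)
    (hmem12 : φ (X 2) ∈ Algebra.adjoin (ZMod 37)
        {pE8 1, pE8 2, pE8 3, pE8 4, pE8 5, pE8 6, pE8 7, cE8 8} ∧
      (φ (X 2)).IsHomogeneous 12)
    (hmem14 : φ (X 3) ∈ Algebra.adjoin (ZMod 37)
        {pE8 1, pE8 2, pE8 3, pE8 4, pE8 5, pE8 6, pE8 7, cE8 8} ∧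
      (φ (X 3)).IsHomogeneous 14)
    (hmem18 : φ (X 4) ∈ Algebra.adjoin (ZMod 37)
        {pE8 1, pE8 2, pE8 3, pE8 4, pE8 5, pE8 6, pE8 7, cE8 8} ∧
      (φ (X 4)).IsHomogeneous 18)
    (hmem20 : φ (X 5) ∈ Algebra.adjoin (ZMod 37)
        {pE8 1, pE8 2, pE8 3, pE8 4, pE8 5, pE8 6, pE8 7, cE8 8} ∧
      (φ (X 5)).IsHomogeneous 20)
    (hmem24 : φ (X 6) ∈ Algebra.adjoin (ZMod 37)
        {pE8 1, pE8 2, pE8 3, pE8 4, pE8 5, pE8 6, pE8 7, cE8 8} ∧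
      (φ (X 6)).IsHomogeneous 24)
    (hmem30 : φ (X 7) ∈ Algebra.adjoin (ZMod 37)
        {pE8 1, pE8 2, pE8 3, pE8 4, pE8 5, pE8 6, pE8 7, cE8 8} ∧
      (φ (X 7)).IsHomogeneous 30)
    (h : MvPolynomial (Fin 8) (ZMod 37)) (hh : φ h = D (φ (X 1))) :
    coeff (Finsupp.single (5 : Fin 8) 1 + Finsupp.single 6 1) h ≠ 0 := by
  classical
  have hcomp : ∀ x : MvPolynomial (Fin 8) (ZMod 37),
      ψ (φ x) = aeval (fun i => ψ (φ (X i))) x := by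
    intro x
    have hu := aeval_unique (ψ.comp φ)
    calc ψ (φ x) = (ψ.comp φ) x := rfl
      _ = aeval (⇑(ψ.comp φ) ∘ X) x := by rw [← hu]
      _ = aeval (fun i => ψ (φ (X i))) x := rfl
  obtain ⟨a4, ha4⟩ := psi_hom hmem18.2
  obtain ⟨a5, ha5⟩ := psi_hom hmem20.2
  obtain ⟨a6, ha6⟩ := psi_hom hmem24.2
  obtain ⟨a7, ha7⟩ := psi_hom hmem30.2
  set a : Fin 8 → Q := ![0, 0, 0, 0, a4, a5, a6, a7] with ha
  obtain ⟨r1, hr1⟩ := Ideal.mem_span_singleton.mp h8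
  obtain ⟨r2, hr2⟩ := Ideal.mem_span_singleton.mp h12
  obtain ⟨r3, hr3⟩ := Ideal.mem_span_singleton.mp h14
  have hφ1 : φ (X 1) = zt8 + pE8 1 ^ 2 * r1 := by linear_combination hr1
  have hφ2 : φ (X 2) = zt12 + pE8 1 ^ 2 * r2 := by linear_combination hr2
  have hφ3 : φ (X 3) = zt14 + pE8 1 * r3 := by linear_combination hr3
  have hG : ∀ i, ψ (φ (X i)) = Polynomial.C (a i) * Polynomial.X ^ dvec i := by
    intro i
    fin_cases i
    · show ψ (φ (X 0)) = Polynomial.C (a 0) * Polynomial.X ^ dvec 0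
      rw [h2, psi_p1, show a 0 = 0 from rfl]
      simp
    · show ψ (φ (X 1)) = Polynomial.C (a 1) * Polynomial.X ^ dvec 1
      rw [hφ1, map_add, map_mul, map_pow, psi_p1, psi_zt8, S8_eq, show a 1 = 0 from rfl]
      simp
    · show ψ (φ (X 2)) = Polynomial.C (a 2) * Polynomial.X ^ dvec 2
      rw [hφ2, map_add, map_mul, map_pow, psi_p1, psi_zt12, S12_eq, show a 2 = 0 from rfl]
      simp
    · show ψ (φ (X 3)) = Polynomial.C (a 3) * Polynomial.X ^ dvec 3
      rw [hφ3, map_add, map_mul, psi_p1, psi_zt14, S14_eq, show a 3 = 0 from rfl]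
      simp
    · exact ha4
    · exact ha5
    · exact ha6
    · exact ha7
  have hDphi : ψ (D (φ (X 1))) = Polynomial.C S44 * Polynomial.X ^ 44 := by
    rw [hφ1, map_add, Derivation.leibniz, Derivation.leibniz_pow, map_add, map_add,
      psi_D_zt8 D hD]
    simp only [smul_eq_mul, nsmul_eq_mul, map_mul, map_pow, psi_p1, Nat.cast_ofNat]
    ring
  have e1 : aeval (fun i => ψ (φ (X i))) h = Polynomial.C S44 * Polynomial.X ^ 44 := by
    rw [← hcomp h, hh, hDphi]
  have e2 := coeff44 (fun i => ψ (φ (X i))) a hG rfl rfl rfl rfl h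
  rw [e1, Polynomial.coeff_C_mul, Polynomial.coeff_X_pow, if_pos rfl, mul_one] at e2
  intro hc
  have hc' : coeff m0 h = 0 := hc
  rw [hc'] at e2
  apply S44_ne
  rw [e2, map_zero, zero_mul]
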